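/- arXiv:0804.1258 — 2 statements merged into one kernel-verified Lean document; each statement's English description precedes it below -/
import Mathlib

section
/- The center of the oriented tree diagram Lie algebra L_0(𝒯^d) is the span of {∂_{x_i} : ι_i ∈ Γ}, where Γ is the set of tip nodes (nodes with no outgoing edge). In particular, dim Z(L_0(𝒯^d)) = |Γ|. -/
noncomputable section
namespace CE

variable (L : Type*) [LieRing L] [LieAlgebra ℂ L]

/-- Raw `k`-cochains: arbitrary functions `L^k → ℂ`. -/
abbrev Raw (k : ℕ) := (Fin k → L) → ℂ

variable {L}

/-- The submodule of alternating multilinear functions `L^k → ℂ`. -/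
def AltML (k : ℕ) : Submodule ℂ (Raw L k) where
  carrier := {f | (∀ (x : Fin k → L) (i : Fin k) (a b : L),
        f (Function.update x i (a + b)) =
          f (Function.update x i a) + f (Function.update x i b)) ∧
      (∀ (x : Fin k → L) (i : Fin k) (c : ℂ) (a : L),
        f (Function.update x i (c • a)) = c * f (Function.update x i a)) ∧
      (∀ (x : Fin k → L) (i j : Fin k), i ≠ j → x i = x j → f x = 0)}
  add_mem' := by
    rintro f g ⟨hf1, hf2, hf3⟩ ⟨hg1, hg2, hg3⟩
    refine ⟨fun x i a b => ?_, fun x i c a => ?_, fun x i j hij hx => ?_⟩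
    · simp only [Pi.add_apply, hf1, hg1]; ring
    · simp only [Pi.add_apply, hf2, hg2]; ring
    · simp only [Pi.add_apply, hf3 x i j hij hx, hg3 x i j hij hx, add_zero]
  zero_mem' := by
    refine ⟨fun x i a b => ?_, fun x i c a => ?_, fun x i j hij hx => ?_⟩ <;> simp
  smul_mem' := by
    rintro c f ⟨hf1, hf2, hf3⟩
    refine ⟨fun x i a b => ?_, fun x i c' a => ?_, fun x i j hij hx => ?_⟩
    · simp only [Pi.smul_apply, smul_eq_mul, hf1]; ring
    · simp only [Pi.smul_apply, smul_eq_mul, hf2]; ring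
    · simp only [Pi.smul_apply, smul_eq_mul, hf3 x i j hij hx, mul_zero]

/-- Index helper: the `s`-th remaining index (0-based) after removing positions
`i < j` from `{0,…,k}`. -/
def idx (i j s : ℕ) : ℕ :=
  let a := if s < i then s else s + 1
  if a < j then a else a + 1

/-- The Chevalley–Eilenberg coboundary (trivial coefficients):
`(d f)(x₀,…,x_k) = ∑_{i<j} (-1)^{i+j} f(⁅x_i,x_j⁆, x₀,…,x̂_i,…,x̂_j,…,x_k)`. -/
def d (k : ℕ) : Raw L k →ₗ[ℂ] Raw L (k+1) where
  toFun f := fun x =>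
    ∑ i : Fin (k+1), ∑ j : Fin (k+1),
      if (i : ℕ) < (j : ℕ) then
        (-1 : ℂ) ^ ((i : ℕ) + (j : ℕ)) *
          f (fun r => if (r : ℕ) = 0 then ⁅x i, x j⁆
              else x ⟨idx i j ((r : ℕ) - 1) % (k+1), Nat.mod_lt _ k.succ_pos⟩)
      else 0
  map_add' f g := by
    funext x
    simp only [Pi.add_apply, ← Finset.sum_add_distrib]
    refine Finset.sum_congr rfl fun i _ => Finset.sum_congr rfl fun j _ => ?_
    split_ifs <;> ring
  map_smul' c f := by
    funext x
    simp only [Pi.smul_apply, smul_eq_mul, RingHom.id_apply, Finset.mul_sum]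
    refine Finset.sum_congr rfl fun i _ => Finset.sum_congr rfl fun j _ => ?_
    split_ifs <;> ring

variable (L)

/-- `k`-cocycles: alternating multilinear cochains killed by the coboundary. -/
def cocycles (k : ℕ) : Submodule ℂ (Raw L k) := AltML k ⊓ LinearMap.ker (d k)

/-- `k+1`-coboundaries: images of alternating multilinear `k`-cochains. -/
def coboundaries (k : ℕ) : Submodule ℂ (Raw L (k+1)) := (AltML k).map (d k)

/-- The `k`-th Chevalley–Eilenberg cohomology of `L` with trivial coefficients. -/
def H : ℕ → Type _
  | 0 => cocycles L 0
  | (k+1) => ↥(cocycles L (k+1)) ⧸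
      (Submodule.comap (cocycles L (k+1)).subtype (coboundaries L k))

instance : ∀ k, AddCommGroup (H L k)
  | 0 => by unfold H; infer_instance
  | (k+1) => by unfold H; infer_instance

instance : ∀ k, Module ℂ (H L k)
  | 0 => by unfold H; infer_instance
  | (k+1) => by unfold H; infer_instance

/-- The `k`-th Betti number of `L`. -/
def betti (k : ℕ) : ℕ := Module.finrank ℂ (H L k)

end CE


noncomputable section

attribute [local instance] LieRing.ofAssociativeRing

/-- An oriented tree diagram `𝒯^d = (𝒩, ℰ, d)`: nodes `{0, …, n−1}`, oriented edges going
from smaller to larger indices, positive integer weights on edges, whose underlying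
undirected graph is a tree. -/
structure OrientedTreeDiagram where
  /-- the number of nodes -/
  n : ℕ
  npos : 0 < n
  /-- the oriented edge relation -/
  edge : Fin n → Fin n → Prop
  edge_lt : ∀ i j, edge i j → i < j
  /-- the weight map `d : ℰ → ℤ₊` -/
  weight : Fin n → Fin n → ℕ
  weight_pos : ∀ i j, edge i j → 0 < weight i j
  /-- the underlying undirected graph is a tree (connected and acyclic) -/
  isTree : (SimpleGraph.fromRel edge).IsTree

namespace OrientedTreeDiagram

variable (T : OrientedTreeDiagram)

/-- The polynomial ring `ℂ[x_1, …, x_n]` (variables indexed by the nodes). -/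
abbrev Poly := MvPolynomial (Fin T.n) ℂ

/-- The operator `∂_{x_i}`. -/
def pd (i : Fin T.n) : Module.End ℂ T.Poly :=
  (MvPolynomial.pderiv i : Derivation ℂ T.Poly T.Poly).toLinearMap

/-- The operator `x_i^k ∂_{x_j}`. -/
def monOp (i : Fin T.n) (k : ℕ) (j : Fin T.n) : Module.End ℂ T.Poly :=
  (LinearMap.mulLeft ℂ ((MvPolynomial.X i : T.Poly) ^ k)).comp (T.pd j)

/-- A node is a root node if it has no incoming edge. -/
def IsRoot (i : Fin T.n) : Prop := ∀ j, ¬ T.edge j i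

/-- A node is a tip node if it has no outgoing edge. -/
def IsTip (i : Fin T.n) : Prop := ∀ j, ¬ T.edge i j

/-- The generators `{∂_{x_i} : ι_i ∈ Λ} ∪ {x_j^{d(ι_j,ι_k)} ∂_{x_k} : (ι_j,ι_k) ∈ ℰ}`. -/
def generators : Set (Module.End ℂ T.Poly) :=
  {f | ∃ i, T.IsRoot i ∧ f = T.pd i} ∪
    {f | ∃ i j, T.edge i j ∧ f = T.monOp i (T.weight i j) j}

/-- The oriented tree diagram Lie algebra `L₀(𝒯^d)`: the Lie subalgebra of differential
operators generated by the generators above. -/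
def L0 : LieSubalgebra ℂ (Module.End ℂ T.Poly) :=
  LieSubalgebra.lieSpan ℂ _ T.generators

end OrientedTreeDiagram




/- ==== AUX ==== -/

open MvPolynomial

namespace TreeAux

lemma pderiv_pderiv' {n : ℕ} (i j : Fin n) (p : MvPolynomial (Fin n) ℂ) :
    pderiv i (pderiv j p) = pderiv j (pderiv i p) := by
  induction p using MvPolynomial.induction_on with
  | C a => simp
  | add p q hp hq => simp [hp, hq]
  | mul_X p k hp =>
    simp only [pderiv_mul, map_add, hp]
    by_cases hik : k = i <;> by_cases hjk : k = j <;>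
      subst_vars <;> simp_all [pderiv_X_self, pderiv_X_of_ne, Ne.symm]

lemma coeff_pderiv {n : ℕ} (j : Fin n) (m : Fin n →₀ ℕ) (p : MvPolynomial (Fin n) ℂ) :
    coeff m (pderiv j p) = ((m j : ℂ) + 1) * coeff (m + Finsupp.single j (1:ℕ)) p := by
  induction p using MvPolynomial.induction_on' with
  | add p q hp hq => simp [hp, hq]; ring
  | monomial s a =>
    rw [pderiv_monomial]
    simp only [coeff_monomial]
    by_cases h : s = m + Finsupp.single j (1:ℕ)
    · subst h
      have h1 : m + Finsupp.single j (1:ℕ) - Finsupp.single j (1:ℕ) = m := by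
        ext k; simp [Finsupp.single_apply]
      have h2 : (m + Finsupp.single j (1:ℕ)) j = m j + 1 := by simp
      rw [if_pos h1, if_pos rfl, h2]
      push_cast; ring
    · rw [if_neg h]
      by_cases h2 : s - Finsupp.single j (1:ℕ) = m
      · rw [if_pos h2]
        have hsj : s j = 0 := by
          by_contra hsj
          apply h
          ext k
          have h2k : s k - Finsupp.single j (1:ℕ) k = m k := by
            rw [← Finsupp.tsub_apply, h2]
          rw [Finsupp.add_apply]
          by_cases hk : k = j
          · subst hk
            rw [Finsupp.single_apply, if_pos rfl] at h2k ⊢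
            omega
          · rw [Finsupp.single_apply, if_neg (Ne.symm hk)] at h2k ⊢
            omega
        simp [hsj]
      · rw [if_neg h2, mul_zero]

lemma eq_C_of_pderiv {n : ℕ} (p : MvPolynomial (Fin n) ℂ)
    (h : ∀ j, pderiv j p = 0) : p = C (coeff 0 p) := by
  ext m
  rw [coeff_C]
  by_cases hm : 0 = m
  · subst hm; simp
  · rw [if_neg hm]
    have hex : ∃ j, m j ≠ 0 := by
      by_contra hc
      push_neg at hc
      apply hm; ext a; simp [hc a]
    obtain ⟨j, hj⟩ := hex
    have key := coeff_pderiv j (m - Finsupp.single j (1:ℕ)) p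
    rw [h j] at key
    have hmm : m - Finsupp.single j (1:ℕ) + Finsupp.single j (1:ℕ) = m := by
      ext k
      rw [Finsupp.add_apply, Finsupp.tsub_apply]
      by_cases hk : k = j
      · subst hk; rw [Finsupp.single_apply, if_pos rfl]; omega
      · rw [Finsupp.single_apply, if_neg (Ne.symm hk)]; omega
    rw [hmm] at key
    have hne : (((m - Finsupp.single j (1:ℕ)) j : ℕ) : ℂ) + 1 ≠ 0 :=
      Nat.cast_add_one_ne_zero _
    simp only [coeff_zero] at key
    exact (mul_eq_zero.mp key.symm).resolve_left hne

end TreeAux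

section MainAux
open MvPolynomial TreeAux
namespace OrientedTreeDiagram
variable (T : OrientedTreeDiagram)

@[simp] lemma pd_apply (i : Fin T.n) (p : T.Poly) : T.pd i p = pderiv i p := rfl

@[simp] lemma monOp_apply (i : Fin T.n) (k : ℕ) (j : Fin T.n) (p : T.Poly) :
    T.monOp i k j p = X i ^ k * pderiv j p := rfl

/-- A linear endomorphism satisfying the Leibniz rule. -/
def IsDer (f : Module.End ℂ T.Poly) : Prop :=
  ∀ p q : T.Poly, f (p * q) = p * f q + f p * q

lemma isDer_pd (i : Fin T.n) : T.IsDer (T.pd i) := by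
  intro p q
  simp [pderiv_mul]; ring

lemma isDer_monOp (i : Fin T.n) (k : ℕ) (j : Fin T.n) : T.IsDer (T.monOp i k j) := by
  intro p q
  simp [pderiv_mul]; ring

/-- The Lie subalgebra of derivations inside `End`. -/
def derSub : LieSubalgebra ℂ (Module.End ℂ T.Poly) where
  carrier := {f | T.IsDer f}
  add_mem' := by
    rintro f g hf hg p q
    simp only [LinearMap.add_apply, hf p q, hg p q]; ring
  zero_mem' := by intro p q; simp
  smul_mem' := by
    rintro c f hf p q
    simp only [LinearMap.smul_apply, hf p q, smul_add, smul_eq_mul, MvPolynomial.smul_eq_C_mul]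
    ring
  lie_mem' := by
    rintro f g hf hg p q
    have hf' : T.IsDer f := hf
    have hg' : T.IsDer g := hg
    simp only [Ring.lie_def, LinearMap.sub_apply, Module.End.mul_apply]
    rw [hg' p q, hf' p q, map_add, map_add, hf' p (g q), hf' (g p) q, hg' p (f q), hg' (f p) q]
    ring

lemma isDer_smul_sum {ι : Type*} (s : Finset ι) (c : ι → ℂ) (v : ι → Fin T.n) :
    T.IsDer (∑ k ∈ s, c k • T.pd (v k)) :=
  Submodule.sum_mem T.derSub.toSubmodule
    (fun k _ => Submodule.smul_mem _ _ (T.isDer_pd (v k) : _ ∈ T.derSub.toSubmodule))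

lemma L0_le_derSub : T.L0 ≤ T.derSub := by
  rw [OrientedTreeDiagram.L0, LieSubalgebra.lieSpan_le]
  rintro f (⟨i, _, rfl⟩ | ⟨i, j, _, rfl⟩)
  · exact T.isDer_pd i
  · exact T.isDer_monOp i _ j

lemma isDer_one {f : Module.End ℂ T.Poly} (hf : T.IsDer f) : f 1 = 0 := by
  have h2 : f 1 = f 1 + f 1 := by simpa using hf 1 1
  exact left_eq_add.mp h2

lemma isDer_C {f : Module.End ℂ T.Poly} (hf : T.IsDer f) (a : ℂ) : f (C a) = 0 := by
  have h1 : (C a : T.Poly) = a • (1 : T.Poly) := by rw [MvPolynomial.smul_eq_C_mul, mul_one]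
  rw [h1, map_smul, T.isDer_one hf, smul_zero]

/-- Derivations that agree on the variables agree. -/
lemma der_ext {f g : Module.End ℂ T.Poly} (hf : T.IsDer f) (hg : T.IsDer g)
    (h : ∀ i, f (X i) = g (X i)) : f = g := by
  have hone : ∀ (u : Module.End ℂ T.Poly), T.IsDer u → u 1 = 0 := by
    intro u hu
    have h2 : u 1 = u 1 + u 1 := by simpa using hu 1 1
    exact left_eq_add.mp h2
  have hC : ∀ (u : Module.End ℂ T.Poly), T.IsDer u → ∀ a : ℂ, u (C a) = 0 := by
    intro u hu a
    have h1 : (C a : T.Poly) = a • (1 : T.Poly) := by rw [MvPolynomial.smul_eq_C_mul, mul_one]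
    rw [h1, map_smul, hone u hu, smul_zero]
  apply LinearMap.ext
  intro p
  induction p using MvPolynomial.induction_on with
  | C a => rw [hC f hf a, hC g hg a]
  | add p q hp hq => rw [map_add, map_add, hp, hq]
  | mul_X p k hp => rw [hf p (X k), hg p (X k), hp, h k]

lemma lie_pd_monOp (j i : Fin T.n) (m : ℕ) :
    ⁅T.pd j, T.monOp j (m+1) i⁆ = ((m+1 : ℕ) : ℂ) • T.monOp j m i := by
  apply LinearMap.ext
  intro f
  simp only [Ring.lie_def, LinearMap.sub_apply, Module.End.mul_apply, LinearMap.smul_apply,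
    pd_apply, monOp_apply, pderiv_mul, pderiv_pow, pderiv_X_self]
  rw [pderiv_pderiv' j i, Nat.cast_smul_eq_nsmul, nsmul_eq_mul]
  push_cast
  ring

lemma monOp_zero (j i : Fin T.n) : T.monOp j 0 i = T.pd i := by
  apply LinearMap.ext
  intro f
  simp

lemma pd_mem_L0 : ∀ i : Fin T.n, T.pd i ∈ T.L0 := by
  have key : ∀ (j i : Fin T.n), T.pd j ∈ T.L0 → T.edge j i → T.pd i ∈ T.L0 := by
    intro j i hj he
    have hmon : ∀ m : ℕ, m ≤ T.weight j i → T.monOp j (T.weight j i - m) i ∈ T.L0 := by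
      intro m
      induction m with
      | zero =>
        intro _
        simp only [Nat.sub_zero]
        exact LieSubalgebra.subset_lieSpan (Or.inr ⟨j, i, he, rfl⟩)
      | succ m ih =>
        intro hm
        have hm' : m ≤ T.weight j i := Nat.le_of_succ_le hm
        have hstep : T.weight j i - m = (T.weight j i - (m+1)) + 1 := by omega
        have hb := T.lie_pd_monOp j i (T.weight j i - (m+1))
        rw [← hstep] at hb
        have hmem : ⁅T.pd j, T.monOp j (T.weight j i - m) i⁆ ∈ T.L0 :=
          LieSubalgebra.lie_mem _ hj (ih hm')
        rw [hb] at hmem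
        rw [hstep] at hmem
        have hc : (((T.weight j i - (m+1)) + 1 : ℕ) : ℂ) ≠ 0 := Nat.cast_ne_zero.mpr (by omega)
        have := LieSubalgebra.smul_mem T.L0 (((T.weight j i - (m+1)) + 1 : ℕ) : ℂ)⁻¹ hmem
        rwa [smul_smul, inv_mul_cancel₀ hc, one_smul] at this
    have := hmon (T.weight j i) le_rfl
    rwa [Nat.sub_self, monOp_zero] at this
  have H : ∀ N, ∀ i : Fin T.n, (i : ℕ) < N → T.pd i ∈ T.L0 := by
    intro N
    induction N with
    | zero => exact fun i h => absurd h (by omega)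
    | succ N ih =>
      intro i hiN
      by_cases hr : T.IsRoot i
      · exact LieSubalgebra.subset_lieSpan (Or.inl ⟨i, hr, rfl⟩)
      · simp only [OrientedTreeDiagram.IsRoot, not_forall, not_not] at hr
        obtain ⟨j, hj⟩ := hr
        have hlt : (j : ℕ) < (i : ℕ) := T.edge_lt j i hj
        exact key j i (ih j (by omega)) hj
  exact fun i => H ((i : ℕ) + 1) i (Nat.lt_succ_self _)

/-- tip partials commute with everything in `L0`. -/
lemma tip_commutes {i : Fin T.n} (hi : T.IsTip i) :
    ∀ w ∈ T.L0, ⁅T.pd i, w⁆ = 0 := by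
  let Cz : LieSubalgebra ℂ (Module.End ℂ T.Poly) :=
    { carrier := {w | ⁅T.pd i, w⁆ = 0}
      add_mem' := fun {a b} ha hb => by
        simp only [Set.mem_setOf_eq] at *
        rw [lie_add, ha, hb, add_zero]
      zero_mem' := by simp
      smul_mem' := fun c a ha => by
        simp only [Set.mem_setOf_eq] at *
        rw [lie_smul, ha, smul_zero]
      lie_mem' := fun {a b} ha hb => by
        simp only [Set.mem_setOf_eq] at *
        rw [leibniz_lie, ha, hb, zero_lie, lie_zero, add_zero] }
  have hgen : T.generators ⊆ Cz := by
    rintro f (⟨j, _, rfl⟩ | ⟨j, k, he, rfl⟩)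
    · show ⁅T.pd i, T.pd j⁆ = 0
      apply LinearMap.ext
      intro p
      simp only [Ring.lie_def, LinearMap.sub_apply, Module.End.mul_apply, pd_apply]
      rw [pderiv_pderiv']
      exact sub_self _
    · show ⁅T.pd i, T.monOp j (T.weight j k) k⁆ = 0
      have hij : i ≠ j := fun h => hi k (h ▸ he)
      apply LinearMap.ext
      intro p
      simp only [Ring.lie_def, LinearMap.sub_apply, Module.End.mul_apply, pd_apply, monOp_apply,
        pderiv_mul, pderiv_pow, pderiv_X_of_ne (Ne.symm hij), LinearMap.zero_apply]
      rw [pderiv_pderiv' i k]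
      ring
  intro w hw
  exact LieSubalgebra.lieSpan_le.mpr hgen hw

end OrientedTreeDiagram
end MainAux

set_option maxHeartbeats 1600000 in
set_option synthInstance.maxHeartbeats 400000 in
open OrientedTreeDiagram in
/-- The center of the oriented tree diagram Lie algebra `L₀(𝒯^d)` is the span of
`{∂_{x_i} : ι_i ∈ Γ}`, where `Γ` is the set of tip nodes; in particular its dimension
is `|Γ|`. -/
theorem center_treeDiagram (T : OrientedTreeDiagram) :
    (∀ z : ↥T.L0, z ∈ LieAlgebra.center ℂ ↥T.L0 ↔
        (z : Module.End ℂ T.Poly) ∈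
          Submodule.span ℂ {f | ∃ i, T.IsTip i ∧ f = T.pd i}) ∧
      Module.finrank ℂ ↥(LieAlgebra.center ℂ ↥T.L0) =
        Nat.card {i : Fin T.n // T.IsTip i} := by
  classical
  have hSL0 : {f | ∃ i, T.IsTip i ∧ f = T.pd i} ⊆ (T.L0 : Set (Module.End ℂ T.Poly)) := by
    rintro f ⟨i, _, rfl⟩
    exact T.pd_mem_L0 i
  have hspanL0 : Submodule.span ℂ {f | ∃ i, T.IsTip i ∧ f = T.pd i} ≤ T.L0.toSubmodule :=
    Submodule.span_le.mpr hSL0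
  have hiff : ∀ z : ↥T.L0, z ∈ LieAlgebra.center ℂ ↥T.L0 ↔
      (z : Module.End ℂ T.Poly) ∈
        Submodule.span ℂ {f | ∃ i, T.IsTip i ∧ f = T.pd i} := by
    intro z
    constructor
    · intro hz
      have hz' : ∀ x : ↥T.L0, ⁅x, z⁆ = 0 :=
        (LieModule.mem_maxTrivSubmodule ℂ ↥T.L0 ↥T.L0 z).mp hz
      set Z : Module.End ℂ T.Poly := (z : Module.End ℂ T.Poly) with hZ
      have hZL0 : Z ∈ T.L0 := z.2
      have hZder : T.IsDer Z := T.L0_le_derSub hZL0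
      have hcomm : ∀ w ∈ T.L0, ⁅Z, w⁆ = 0 := by
        intro w hw
        have h1 : (⁅(⟨w, hw⟩ : ↥T.L0), z⁆ : ↥T.L0) = 0 := hz' ⟨w, hw⟩
        have h2 : ⁅w, Z⁆ = 0 := by
          have := congrArg (fun a : ↥T.L0 => (a : Module.End ℂ T.Poly)) h1
          simpa using this
        rw [← lie_skew, h2, neg_zero]
      set c : Fin T.n → ℂ := fun k => MvPolynomial.coeff 0 (Z (MvPolynomial.X k)) with hc
      have hZX : ∀ k, Z (MvPolynomial.X k) = MvPolynomial.C (c k) := by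
        intro k
        apply TreeAux.eq_C_of_pderiv
        intro j
        have hbr : ⁅Z, T.pd j⁆ = 0 := hcomm _ (T.pd_mem_L0 j)
        have happ := congrArg (fun f : Module.End ℂ T.Poly => f (MvPolynomial.X k)) hbr
        simp only [Ring.lie_def, LinearMap.sub_apply, Module.End.mul_apply,
          LinearMap.zero_apply, OrientedTreeDiagram.pd_apply] at happ
        by_cases hkj : k = j
        · subst hkj
          rw [MvPolynomial.pderiv_X_self, T.isDer_one hZder] at happ
          linear_combination -happ
        · rw [MvPolynomial.pderiv_X_of_ne hkj, map_zero] at happ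
          linear_combination -happ
      have hsum : Z = ∑ k, c k • T.pd k := by
        apply T.der_ext hZder (T.isDer_smul_sum Finset.univ c (fun k => k))
        intro k0
        rw [hZX k0, LinearMap.sum_apply, Finset.sum_eq_single k0]
        · simp [MvPolynomial.smul_eq_C_mul]
        · intro b _ hb
          simp [MvPolynomial.pderiv_X_of_ne (fun h => hb h.symm : (k0 : Fin T.n) ≠ b)]
        · simp
      have hctip : ∀ k, ¬ T.IsTip k → c k = 0 := by
        intro k hk
        simp only [OrientedTreeDiagram.IsTip, not_forall, not_not] at hk
        obtain ⟨l, hl⟩ := hk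
        have hbr : ⁅Z, T.monOp k (T.weight k l) l⁆ = 0 :=
          hcomm _ (LieSubalgebra.subset_lieSpan (Or.inr ⟨k, l, hl, rfl⟩))
        have happ := congrArg (fun f : Module.End ℂ T.Poly => f (MvPolynomial.X l)) hbr
        simp only [Ring.lie_def, LinearMap.sub_apply, Module.End.mul_apply,
          LinearMap.zero_apply, OrientedTreeDiagram.monOp_apply] at happ
        rw [MvPolynomial.pderiv_X_self, mul_one, hZX l, MvPolynomial.pderiv_C,
          mul_zero, sub_zero] at happ
        rw [hsum, LinearMap.sum_apply] at happ
        rw [Finset.sum_eq_single k] at happ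
        · rw [LinearMap.smul_apply, OrientedTreeDiagram.pd_apply, MvPolynomial.pderiv_pow,
            MvPolynomial.pderiv_X_self, mul_one] at happ
          have hd : (T.weight k l : MvPolynomial (Fin T.n) ℂ) ≠ 0 :=
            Nat.cast_ne_zero.mpr (T.weight_pos k l hl).ne'
          have hX : (MvPolynomial.X k : T.Poly) ^ (T.weight k l - 1) ≠ 0 :=
            pow_ne_zero _ (MvPolynomial.X_ne_zero k)
          rcases smul_eq_zero.mp happ with h | h
          · exact h
          · exact absurd h (mul_ne_zero hd hX)
        · intro b _ hb
          rw [LinearMap.smul_apply, OrientedTreeDiagram.pd_apply, MvPolynomial.pderiv_pow,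
            MvPolynomial.pderiv_X_of_ne (fun h => hb h.symm : k ≠ b), mul_zero, smul_zero]
        · simp
      rw [show Z = (z : Module.End ℂ T.Poly) from rfl] at hsum ⊢
      rw [hsum]
      apply Submodule.sum_mem
      intro k _
      by_cases hk : T.IsTip k
      · exact Submodule.smul_mem _ _ (Submodule.subset_span ⟨k, hk, rfl⟩)
      · rw [hctip k hk, zero_smul]
        exact Submodule.zero_mem _
    · intro hz
      rw [LieModule.mem_maxTrivSubmodule]
      intro x
      have key : ∀ a ∈ Submodule.span ℂ {f | ∃ i, T.IsTip i ∧ f = T.pd i},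
          ⁅(x : Module.End ℂ T.Poly), a⁆ = 0 := by
        intro a ha
        induction ha using Submodule.span_induction with
        | mem a ha =>
          obtain ⟨i, hi, rfl⟩ := ha
          rw [← lie_skew, T.tip_commutes hi _ x.2, neg_zero]
        | zero => exact lie_zero _
        | add a b _ _ ha hb => rw [lie_add, ha, hb, add_zero]
        | smul r a _ ha => rw [lie_smul, ha, smul_zero]
      apply Subtype.ext
      rw [LieSubalgebra.coe_bracket, ZeroMemClass.coe_zero]
      exact key _ hz
  refine ⟨hiff, ?_⟩
  haveI : Fintype {i : Fin T.n // T.IsTip i} := Fintype.ofFinite _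
  set v : {i : Fin T.n // T.IsTip i} → Module.End ℂ T.Poly := fun i => T.pd i.1 with hv
  have hrange : Set.range v = {f | ∃ i, T.IsTip i ∧ f = T.pd i} := by
    ext f
    constructor
    · rintro ⟨i, rfl⟩
      exact ⟨i.1, i.2, rfl⟩
    · rintro ⟨i, hi, rfl⟩
      exact ⟨⟨i, hi⟩, rfl⟩
  have hli : LinearIndependent ℂ v := by
    rw [Fintype.linearIndependent_iff]
    intro g hg i0
    have happ := congrArg (fun f : Module.End ℂ T.Poly => f (MvPolynomial.X i0.1)) hg
    simp only [LinearMap.sum_apply, LinearMap.smul_apply, LinearMap.zero_apply, hv,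
      OrientedTreeDiagram.pd_apply] at happ
    rw [Finset.sum_eq_single i0] at happ
    · rw [MvPolynomial.pderiv_X_self] at happ
      have : MvPolynomial.C (g i0) = (0 : T.Poly) := by
        rw [← happ, MvPolynomial.smul_eq_C_mul, mul_one]
      exact_mod_cast MvPolynomial.C_injective _ _ (this.trans (MvPolynomial.C_0).symm)
    · intro b _ hb
      have hne : (i0.1 : Fin T.n) ≠ b.1 := fun h => hb (Subtype.ext h.symm)
      rw [MvPolynomial.pderiv_X_of_ne hne, smul_zero]
    · simp
  have hfr : Module.finrank ℂ
      ↥(Submodule.span ℂ {f | ∃ i, T.IsTip i ∧ f = T.pd i}) =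
      Fintype.card {i : Fin T.n // T.IsTip i} := by
    rw [← hrange]
    exact finrank_span_eq_card hli
  let ι : ↥(LieAlgebra.center ℂ ↥T.L0) →ₗ[ℂ]
      ↥(Submodule.span ℂ {f | ∃ i, T.IsTip i ∧ f = T.pd i}) :=
    { toFun := fun z => ⟨((z : ↥T.L0) : Module.End ℂ T.Poly), (hiff _).mp z.2⟩
      map_add' := fun a b => Subtype.ext rfl
      map_smul' := fun r a => Subtype.ext rfl }
  have hbij : Function.Bijective ι := by
    constructor
    · intro a b hab
      have h' := congrArg (fun t : ↥(Submodule.span ℂ {f | ∃ i, T.IsTip i ∧ f = T.pd i}) =>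
        (t : Module.End ℂ T.Poly)) hab
      exact Subtype.ext (Subtype.ext h')
    · intro a
      exact ⟨⟨⟨(a : Module.End ℂ T.Poly), hspanL0 a.2⟩,
        (hiff ⟨(a : Module.End ℂ T.Poly), hspanL0 a.2⟩).mpr a.2⟩, Subtype.ext rfl⟩
  have hfe : Module.finrank ℂ ↥(LieAlgebra.center ℂ ↥T.L0) =
      Module.finrank ℂ ↥(Submodule.span ℂ {f | ∃ i, T.IsTip i ∧ f = T.pd i}) :=
    LinearEquiv.finrank_eq (LinearEquiv.ofBijective ι hbij)
  rw [hfe, hfr, Nat.card_eq_fintype_card]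
end
end
end

section
/- Let 𝔤 be a finite-dimensional Lie algebra and g_1,…,g_t ∈ 𝔤 pairwise commuting elements such that 𝔤 has a basis of simultaneous eigenvectors of all ad g_i. Then the inclusion of the weight-zero subcomplex Λ_{(0,…,0)}𝔤 into Λ𝔤 induces an isomorphism on Lie algebra cohomology with trivial coefficients. -/
noncomputable section
namespace CE

variable (L : Type*) [LieRing L] [LieAlgebra ℂ L]

variable {L}

/-! ## Auxiliary infrastructure -/

/-- Multilinearity predicate (the first two clauses of `AltML`). -/
def IsML {k : ℕ} (f : Raw L k) : Prop :=
  (∀ (x : Fin k → L) (i : Fin k) (a b : L),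
      f (Function.update x i (a + b)) =
        f (Function.update x i a) + f (Function.update x i b)) ∧
  (∀ (x : Fin k → L) (i : Fin k) (c : ℂ) (a : L),
      f (Function.update x i (c • a)) = c * f (Function.update x i a))

lemma isML_of_mem_AltML {k : ℕ} {f : Raw L k} (hf : f ∈ AltML k) : IsML f :=
  ⟨hf.1, hf.2.1⟩

/-- Package a multilinear raw cochain as a `MultilinearMap`. -/
def IsML.toML {k : ℕ} {f : Raw L k} (hf : IsML f) :
    MultilinearMap ℂ (fun _ : Fin k => L) ℂ where
  toFun := f
  map_update_add' := by
    intro inst x i a b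
    rw [Subsingleton.elim inst (instDecidableEqFin k)]
    exact hf.1 x i a b
  map_update_smul' := by
    intro inst x i c a
    rw [Subsingleton.elim inst (instDecidableEqFin k)]
    simpa [smul_eq_mul] using hf.2 x i c a

@[simp] lemma IsML.toML_apply {k : ℕ} {f : Raw L k} (hf : IsML f) (x : Fin k → L) :
    hf.toML x = f x := rfl

/-- Package an alternating multilinear raw cochain as an `AlternatingMap`. -/
def toAlt {k : ℕ} {f : Raw L k} (hf : f ∈ AltML k) : L [⋀^Fin k]→ₗ[ℂ] ℂ :=
  { (isML_of_mem_AltML hf).toML with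
    map_eq_zero_of_eq' := fun x i j hx hij => hf.2.2 x i j hij hx }

@[simp] lemma toAlt_apply {k : ℕ} {f : Raw L k} (hf : f ∈ AltML k) (x : Fin k → L) :
    toAlt hf x = f x := rfl

lemma IsML.add {k : ℕ} {f g : Raw L k} (hf : IsML f) (hg : IsML g) : IsML (f + g) := by
  refine ⟨fun x i a b => ?_, fun x i c a => ?_⟩
  · simp only [Pi.add_apply, hf.1, hg.1]; ring
  · simp only [Pi.add_apply, hf.2, hg.2]; ring

lemma IsML.zero {k : ℕ} : IsML (0 : Raw L k) := by
  refine ⟨fun x i a b => ?_, fun x i c a => ?_⟩ <;> simp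

lemma IsML.sum {k : ℕ} {α : Type*} (s : Finset α) (F : α → Raw L k)
    (h : ∀ a ∈ s, IsML (F a)) : IsML (∑ a ∈ s, F a) := by
  exact Finset.sum_induction F IsML (fun a b ha hb => ha.add hb) IsML.zero h

lemma succAbove_val {n : ℕ} (p : Fin (n+1)) (i : Fin n) :
    ((p.succAbove i : Fin (n+1)) : ℕ) = if (i : ℕ) < (p : ℕ) then (i : ℕ) else (i : ℕ) + 1 := by
  rcases lt_or_ge ((i : ℕ)) ((p : ℕ)) with h | h
  · rw [Fin.succAbove_of_castSucc_lt p i (by simpa [Fin.lt_def] using h)]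
    simp [h]
  · rw [Fin.succAbove_of_le_castSucc p i (by simpa [Fin.le_def] using h)]
    simp [Nat.not_lt.mpr h]

/-- The `cons`/`succAbove` normal form of the coboundary (for positive degree). -/
lemma d_apply (m : ℕ) (f : Raw L (m+1)) (x : Fin (m+2) → L) :
    d (m+1) f x =
      ∑ i : Fin (m+2), ∑ j : Fin (m+1),
        if (i : ℕ) ≤ (j : ℕ) then
          (-1 : ℂ) ^ ((i : ℕ) + (j : ℕ) + 1) *
            f (Fin.cons ⁅x i, x j.succ⁆ (x ∘ i.succAbove ∘ j.succAbove))
        else 0 := by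
  show (∑ i : Fin (m+2), ∑ j : Fin (m+2), _) = _
  refine Finset.sum_congr rfl fun i _ => ?_
  rw [Fin.sum_univ_succ]
  have h0 : ¬ ((i : ℕ) < ((0 : Fin (m+2)) : ℕ)) := by simp
  rw [if_neg h0, zero_add]
  refine Finset.sum_congr rfl fun j _ => ?_
  have hcond : ((i : ℕ) < ((j.succ : Fin (m+2)) : ℕ)) ↔ ((i : ℕ) ≤ (j : ℕ)) := by
    simp [Fin.val_succ]
  by_cases hij : (i : ℕ) ≤ (j : ℕ)
  · rw [if_pos (hcond.mpr hij), if_pos hij]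
    have hsign : ((i:ℕ) + ((j.succ : Fin (m+2)) : ℕ)) = (i:ℕ) + (j:ℕ) + 1 := by
      simp only [Fin.val_succ]; omega
    rw [hsign]
    refine congrArg _ (congrArg f (funext fun r => ?_))
    refine Fin.cases ?_ (fun s => ?_) r
    · simp
    · have hne : ((s.succ : Fin (m+1)) : ℕ) ≠ 0 := by simp
      simp only [if_neg hne]
      rw [Fin.cons_succ]
      have hlt : idx (i : ℕ) ((j.succ : Fin (m+2)) : ℕ) (((s.succ : Fin (m+1)) : ℕ) - 1) < m + 2 := by
        unfold idx
        have := s.isLt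
        simp only [Fin.val_succ, Nat.add_sub_cancel]
        split_ifs <;> omega
      have hval : idx (i : ℕ) ((j.succ : Fin (m+2)) : ℕ) (((s.succ : Fin (m+1)) : ℕ) - 1)
          = ((i.succAbove (j.succAbove s) : Fin (m+2)) : ℕ) := by
        rw [succAbove_val]
        unfold idx
        have h1 := succAbove_val j s
        have his := s.isLt
        have hij' : (i:ℕ) ≤ (j:ℕ) := hij
        simp only [Fin.val_succ, Nat.add_sub_cancel]
        split_ifs at h1 ⊢ <;> omega
      refine congrArg x (Fin.ext ?_)
      show idx (↑i) (↑(j.succ)) (↑(s.succ) - 1) % (m + 1 + 1) = _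
      rw [Nat.mod_eq_of_lt hlt, hval]; rfl
  · rw [if_neg (fun h => hij (hcond.mp h)), if_neg hij]

lemma d_zero_apply (f : Raw L 0) (x : Fin 1 → L) : d 0 f x = 0 := by
  show (∑ i : Fin 1, ∑ j : Fin 1, _) = (0:ℂ)
  simp


open Function

variable {m : ℕ}

/-- The argument tuple of a single term of the coboundary. -/
def tup (i : Fin (m+2)) (j : Fin (m+1)) (x : Fin (m+2) → L) : Fin (m+1) → L :=
  Fin.cons ⁅x i, x j.succ⁆ (x ∘ i.succAbove ∘ j.succAbove)

lemma d_apply' (f : Raw L (m+1)) (x : Fin (m+2) → L) :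
    d (m+1) f x =
      ∑ i : Fin (m+2), ∑ j : Fin (m+1),
        if (i : ℕ) ≤ (j : ℕ) then
          (-1 : ℂ) ^ ((i : ℕ) + (j : ℕ) + 1) * f (tup i j x)
        else 0 :=
  d_apply m f x

lemma ne_succ_of_le {i : Fin (m+2)} {j : Fin (m+1)} (hij : (i : ℕ) ≤ (j : ℕ)) :
    i ≠ j.succ := by
  intro h
  have := congrArg Fin.val h
  simp only [Fin.val_succ] at this
  omega

lemma succAbove_succ_eq {i : Fin (m+2)} {j : Fin (m+1)} (hij : (i : ℕ) ≤ (j : ℕ)) :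
    i.succAbove j = j.succ :=
  Fin.succAbove_of_le_castSucc i j (by simpa [Fin.le_def] using hij)

lemma tup_update_left (i : Fin (m+2)) (j : Fin (m+1)) (hij : (i : ℕ) ≤ (j : ℕ))
    (x : Fin (m+2) → L) (z : L) :
    tup i j (update x i z) = update (tup i j x) 0 ⁅z, x j.succ⁆ := by
  funext r
  refine Fin.cases ?_ (fun s => ?_) r
  · show ⁅update x i z i, update x i z j.succ⁆ = _
    rw [update_self, update_of_ne (ne_succ_of_le hij).symm, update_self]
  · show (update x i z) (i.succAbove (j.succAbove s)) = _
    rw [update_of_ne (Fin.succAbove_ne i (j.succAbove s)),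
      update_of_ne (Fin.succ_ne_zero s)]
    rfl

lemma tup_update_right (i : Fin (m+2)) (j : Fin (m+1)) (hij : (i : ℕ) ≤ (j : ℕ))
    (x : Fin (m+2) → L) (z : L) :
    tup i j (update x j.succ z) = update (tup i j x) 0 ⁅x i, z⁆ := by
  funext r
  refine Fin.cases ?_ (fun s => ?_) r
  · show ⁅update x j.succ z i, update x j.succ z j.succ⁆ = _
    rw [update_of_ne (ne_succ_of_le hij), update_self, update_self]
  · show (update x j.succ z) (i.succAbove (j.succAbove s)) = _
    have hne : i.succAbove (j.succAbove s) ≠ j.succ := by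
      rw [← succAbove_succ_eq hij]
      exact fun h => Fin.succAbove_ne j s (Fin.succAbove_right_injective h)
    rw [update_of_ne hne, update_of_ne (Fin.succ_ne_zero s)]
    rfl

lemma tup_update_other (i : Fin (m+2)) (j : Fin (m+1)) (hij : (i : ℕ) ≤ (j : ℕ))
    (s : Fin (m+2)) (hsi : s ≠ i) (hsj : s ≠ j.succ) :
    ∃ r0 : Fin m, ∀ (x : Fin (m+2) → L) (z : L),
      tup i j (update x s z) = update (tup i j x) r0.succ z := by
  obtain ⟨u, hu⟩ := Fin.exists_succAbove_eq hsi
  have huj : u ≠ j := by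
    intro h; subst h
    exact hsj (by rw [← hu, succAbove_succ_eq hij])
  obtain ⟨r0, hr0⟩ := Fin.exists_succAbove_eq huj
  refine ⟨r0, fun x z => ?_⟩
  funext r
  refine Fin.cases ?_ (fun s' => ?_) r
  · show ⁅update x s z i, update x s z j.succ⁆ = _
    rw [update_of_ne hsi.symm, update_of_ne hsj.symm,
      update_of_ne (Fin.succ_ne_zero r0).symm]
    rfl
  · show (update x s z) (i.succAbove (j.succAbove s')) = update (tup i j x) r0.succ z s'.succ
    by_cases h : s' = r0
    · subst h
      have hsa : i.succAbove (j.succAbove s') = s := by rw [hr0, hu]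
      rw [hsa, update_self, update_self]
    · have h1 : i.succAbove (j.succAbove s') ≠ s := by
        rw [← hu, ← hr0]
        intro hh
        exact h (Fin.succAbove_right_injective (Fin.succAbove_right_injective hh))
      have h2 : (s'.succ : Fin (m+1)) ≠ r0.succ := by
        simpa [Fin.succ_inj] using h
      rw [update_of_ne h1, update_of_ne h2]
      rfl

lemma isML_d {k : ℕ} {f : Raw L k} (hf : IsML f) : IsML (d k f) := by
  cases k with
  | zero =>
    refine ⟨fun x i a b => ?_, fun x i c a => ?_⟩ <;> simp [d_zero_apply]
  | succ m =>
    constructor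
    · intro x p a b
      rw [d_apply', d_apply', d_apply', ← Finset.sum_add_distrib]
      refine Finset.sum_congr rfl fun i _ => ?_
      rw [← Finset.sum_add_distrib]
      refine Finset.sum_congr rfl fun j _ => ?_
      by_cases hij : (i:ℕ) ≤ (j:ℕ)
      · simp only [if_pos hij]
        rcases eq_or_ne p i with rfl | hpi
        · rw [tup_update_left p j hij, tup_update_left p j hij, tup_update_left p j hij,
            add_lie, hf.1]
          ring
        · rcases eq_or_ne p j.succ with rfl | hpj
          · rw [tup_update_right i j hij, tup_update_right i j hij, tup_update_right i j hij,
              lie_add, hf.1]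
            ring
          · obtain ⟨r0, hr0⟩ := tup_update_other (L := L) i j hij p hpi hpj
            rw [hr0, hr0, hr0, hf.1]
            ring
      · simp only [if_neg hij]; ring
    · intro x p c a
      rw [d_apply', d_apply', Finset.mul_sum]
      refine Finset.sum_congr rfl fun i _ => ?_
      rw [Finset.mul_sum]
      refine Finset.sum_congr rfl fun j _ => ?_
      by_cases hij : (i:ℕ) ≤ (j:ℕ)
      · simp only [if_pos hij]
        rcases eq_or_ne p i with rfl | hpi
        · rw [tup_update_left p j hij, tup_update_left p j hij, smul_lie, hf.2]; ring
        · rcases eq_or_ne p j.succ with rfl | hpj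
          · rw [tup_update_right i j hij, tup_update_right i j hij, lie_smul, hf.2]; ring
          · obtain ⟨r0, hr0⟩ := tup_update_other (L := L) i j hij p hpi hpj
            rw [hr0, hr0, hf.2]; ring
      · simp only [if_neg hij]; ring

/-- Contraction with a fixed element `g`. -/
def iota (g : L) {k : ℕ} (f : Raw L (k+1)) : Raw L k := fun z => f (Fin.cons g z)

lemma iota_mem {g : L} {k : ℕ} {f : Raw L (k+1)} (hf : f ∈ AltML (k+1)) :
    iota g f ∈ AltML k := by
  refine ⟨fun x i a b => ?_, fun x i c a => ?_, fun x i j hij hx => ?_⟩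
  · show f (Fin.cons g (update x i (a+b))) = f (Fin.cons g (update x i a)) + f (Fin.cons g (update x i b))
    rw [Fin.cons_update, Fin.cons_update, Fin.cons_update, hf.1]
  · show f (Fin.cons g (update x i (c • a))) = c * f (Fin.cons g (update x i a))
    rw [Fin.cons_update, Fin.cons_update, hf.2.1]
  · refine hf.2.2 (Fin.cons g x) i.succ j.succ (by simpa [Fin.succ_inj] using hij) ?_
    rw [Fin.cons_succ, Fin.cons_succ]; exact hx

lemma rot {k : ℕ} {f : Raw L (k+1)} (hf : f ∈ AltML (k+1)) (y : Fin (k+1) → L)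
    (r : Fin (k+1)) :
    f (Fin.cons (y r) (y ∘ r.succAbove)) = (-1:ℂ)^(r:ℕ) * f y := by
  have h1 : Fin.cons (y r) (y ∘ r.succAbove) = y ∘ ⇑(r.cycleRange)⁻¹ := by
    funext s
    refine Fin.cases ?_ (fun u => ?_) s
    · show _ = y ((r.cycleRange)⁻¹ 0)
      rw [Equiv.Perm.inv_def, Fin.cycleRange_symm_zero, Fin.cons_zero]
    · show _ = y ((r.cycleRange)⁻¹ u.succ)
      rw [Equiv.Perm.inv_def, Fin.cycleRange_symm_succ, Fin.cons_succ]
      rfl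
  rw [h1]
  have h2 := (toAlt hf).map_perm y ((r.cycleRange)⁻¹)
  rw [toAlt_apply, toAlt_apply] at h2
  rw [h2, Equiv.Perm.sign_inv, Fin.sign_cycleRange]
  rcases Nat.even_or_odd (r:ℕ) with he | ho
  · rw [he.neg_one_pow, he.neg_one_pow, one_smul, one_mul]
  · rw [ho.neg_one_pow, ho.neg_one_pow, neg_one_mul]
    simp [Units.smul_def]

lemma update_rot {k : ℕ} {f : Raw L (k+1)} (hf : f ∈ AltML (k+1)) (x : Fin (k+1) → L)
    (r : Fin (k+1)) (z : L) :
    f (update x r z) = (-1:ℂ)^(r:ℕ) * f (Fin.cons z (x ∘ r.succAbove)) := by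
  have h := rot hf (update x r z) r
  have e1 : (update x r z) r = z := update_self r z x
  have e2 : (update x r z) ∘ r.succAbove = x ∘ r.succAbove := by
    funext u; exact update_of_ne (Fin.succAbove_ne r u) z x
  rw [e1, e2] at h
  rw [h, ← mul_assoc, ← pow_add]
  rw [Even.neg_one_pow ⟨(r:ℕ), rfl⟩, one_mul]

lemma swap01 {k : ℕ} {f : Raw L (k+2)} (hf : f ∈ AltML (k+2)) (a g : L)
    (t : Fin k → L) :
    f (Fin.cons a (Fin.cons g t)) = - f (Fin.cons g (Fin.cons a t)) := by
  have h01 : (0 : Fin (k+2)) ≠ 1 := by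
    intro h; have := congrArg Fin.val h; simp at this
  have h := (toAlt hf).map_swap (Fin.cons g (Fin.cons a t)) h01
  rw [toAlt_apply, toAlt_apply] at h
  have hone : (1 : Fin (k+2)) = (0 : Fin (k+1)).succ := rfl
  have harg : (Fin.cons g (Fin.cons a t)) ∘ ⇑(Equiv.swap (0 : Fin (k+2)) 1)
      = Fin.cons a (Fin.cons g t) := by
    funext s
    simp only [Function.comp_apply]
    refine Fin.cases ?_ (fun u => ?_) s
    · rw [Equiv.swap_apply_left, Fin.cons_zero, hone, Fin.cons_succ, Fin.cons_zero]
    · refine Fin.cases ?_ (fun u' => ?_) u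
      · rw [← hone, Equiv.swap_apply_right, Fin.cons_zero, hone, Fin.cons_succ, Fin.cons_zero]
      · have hne0 : (u'.succ.succ : Fin (k+2)) ≠ 0 := Fin.succ_ne_zero _
        have hne1 : (u'.succ.succ : Fin (k+2)) ≠ 1 := by
          intro h'; have := congrArg Fin.val h'; simp [Fin.val_succ] at this
        rw [Equiv.swap_apply_of_ne_of_ne hne0 hne1, Fin.cons_succ, Fin.cons_succ,
          Fin.cons_succ, Fin.cons_succ]
  rw [harg] at h
  rw [h]


lemma tup_succ_cons (i : Fin (m+2)) (j : Fin (m+1)) (g : L) (x : Fin (m+2) → L) :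
    tup i.succ j.succ (Fin.cons g x)
      = Fin.cons ⁅x i, x j.succ⁆ (Fin.cons g (x ∘ i.succAbove ∘ j.succAbove)) := by
  funext r
  refine Fin.cases ?_ (fun s => ?_) r
  · simp [tup]
  · simp only [tup, Fin.cons_succ, Function.comp_apply]
    refine Fin.cases ?_ (fun u => ?_) s
    · simp [Fin.succ_succAbove_zero]
    · simp [Fin.succ_succAbove_succ]

/-- The Cartan homotopy formula. -/
lemma cartan {k : ℕ} {f : Raw L (k+1)} (hf : f ∈ AltML (k+1)) (g : L) (x : Fin (k+1) → L) :
    d k (iota g f) x + d (k+1) f (Fin.cons g x)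
      = - ∑ r : Fin (k+1), f (update x r ⁅g, x r⁆) := by
  have hsgn : ∀ a : ℕ, ((-1:ℂ))^(a+2) = (-1)^a := fun a => by rw [pow_succ, pow_succ]; ring
  have hsplit : d (k+1) f (Fin.cons g x)
      = (∑ j : Fin (k+1), (-1:ℂ)^((j:ℕ)+1) * f (Fin.cons ⁅g, x j⁆ (x ∘ j.succAbove)))
        + ∑ i' : Fin (k+1), ∑ j : Fin (k+1),
            if (i':ℕ)+1 ≤ (j:ℕ) then
              (-1:ℂ)^((i':ℕ)+(j:ℕ)) * f (tup i'.succ j (Fin.cons g x))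
            else 0 := by
    rw [d_apply', Fin.sum_univ_succ]
    congr 1
    · refine Finset.sum_congr rfl fun j _ => ?_
      rw [if_pos (by simp : (((0:Fin (k+2)):ℕ)) ≤ (j:ℕ))]
      have hz : ((0:Fin (k+2)):ℕ) = 0 := rfl
      rw [hz, Nat.zero_add]
      refine congrArg _ (congrArg f (funext fun r => ?_))
      refine Fin.cases ?_ (fun s => ?_) r
      · simp [tup]
      · simp only [tup, Fin.cons_succ, Function.comp_apply]
        rw [Fin.zero_succAbove, Fin.cons_succ]
    · refine Finset.sum_congr rfl fun i' _ => Finset.sum_congr rfl fun j _ => ?_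
      have hiff : ((i'.succ : Fin (k+2)) : ℕ) ≤ (j:ℕ) ↔ (i':ℕ)+1 ≤ (j:ℕ) := by
        simp [Fin.val_succ]
      by_cases hc : (i':ℕ)+1 ≤ (j:ℕ)
      · rw [if_pos (hiff.mpr hc), if_pos hc]
        have : ((i'.succ : Fin (k+2)) : ℕ) + (j:ℕ) + 1 = (i':ℕ)+(j:ℕ)+2 := by
          simp [Fin.val_succ]; omega
        rw [this, hsgn]
      · rw [if_neg (fun h => hc (hiff.mp h)), if_neg hc]
  have hA : (∑ j : Fin (k+1), (-1:ℂ)^((j:ℕ)+1) * f (Fin.cons ⁅g, x j⁆ (x ∘ j.succAbove)))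
      = - ∑ r : Fin (k+1), f (update x r ⁅g, x r⁆) := by
    rw [← Finset.sum_neg_distrib]
    refine Finset.sum_congr rfl fun j _ => ?_
    rw [update_rot hf x j ⁅g, x j⁆, pow_succ]
    ring
  have hC : d k (iota g f) x
      = - ∑ i' : Fin (k+1), ∑ j : Fin (k+1),
            if (i':ℕ)+1 ≤ (j:ℕ) then
              (-1:ℂ)^((i':ℕ)+(j:ℕ)) * f (tup i'.succ j (Fin.cons g x))
            else 0 := by
    cases k with
    | zero =>
      rw [d_zero_apply]
      have : ∀ i' j : Fin 1, ¬ ((i':ℕ)+1 ≤ (j:ℕ)) := by decide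
      simp [this]
    | succ m =>
      rw [d_apply', ← Finset.sum_neg_distrib]
      refine Finset.sum_congr rfl fun i _ => ?_
      rw [← Finset.sum_neg_distrib]
      conv_rhs => rw [Fin.sum_univ_succ]
      have h0 : ¬ ((i:ℕ)+1 ≤ (((0:Fin (m+2))):ℕ)) := by simp
      rw [if_neg h0, neg_zero, zero_add]
      refine Finset.sum_congr rfl fun j _ => ?_
      have hiff : (i:ℕ)+1 ≤ ((j.succ : Fin (m+2)):ℕ) ↔ (i:ℕ) ≤ (j:ℕ) := by
        simp [Fin.val_succ]
      by_cases hc : (i:ℕ) ≤ (j:ℕ)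
      · rw [if_pos hc, if_pos (hiff.mpr hc)]
        have hkey : f (tup i.succ j.succ (Fin.cons g x))
            = - f (Fin.cons g (tup i j x)) := by
          rw [tup_succ_cons]
          exact swap01 hf _ g _
        rw [hkey]
        have hexp : (i:ℕ) + ((j.succ : Fin (m+2)):ℕ) = (i:ℕ)+(j:ℕ)+1 := by
          simp [Fin.val_succ]; omega
        rw [hexp]
        show _ = -((-1:ℂ)^((i:ℕ)+(j:ℕ)+1) * - f (Fin.cons g (tup i j x)))
        simp only [iota]
        ring
      · rw [if_neg hc, if_neg (fun h => hc (hiff.mp h)), neg_zero]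
  rw [hsplit, hA, hC]
  ring


/-! ## Weight projections -/

section Weight

variable {n t : ℕ} (b : Module.Basis (Fin n) ℂ L) (wt : Fin n → Fin t → ℂ)

lemma eq_of_isML {k : ℕ} {f f' : Raw L k} (hf : IsML f) (hf' : IsML f')
    (h : ∀ w : Fin k → Fin n, f (fun r => b (w r)) = f' (fun r => b (w r))) : f = f' := by
  have heq := Module.Basis.ext_multilinear (f := hf.toML) (g := hf'.toML) (fun _ => b) h
  funext x
  change hf.toML x = hf'.toML x
  rw [heq]

open scoped Classical in
/-- Projection onto the weight-`μ` component. -/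
def P (μ : Fin t → ℂ) (k : ℕ) (f : Raw L k) : Raw L k :=
  fun x => ∑ v : Fin k → Fin n,
    if (∑ r, wt (v r)) = μ then (∏ r, b.repr (x r) (v r)) * f (fun r => b (v r)) else 0

lemma prod_repr_update {k : ℕ} (x : Fin k → L) (i : Fin k) (z : L) (v : Fin k → Fin n) :
    (∏ r, b.repr (update x i z r) (v r))
      = b.repr z (v i) * ∏ r ∈ Finset.univ.erase i, b.repr (x r) (v r) := by
  have h1 : (fun r => b.repr (update x i z r) (v r))
      = update (fun r => b.repr (x r) (v r)) i (b.repr z (v i)) := by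
    funext r
    by_cases hr : r = i
    · subst hr; rw [update_self, update_self]
    · rw [update_of_ne hr, update_of_ne hr]
  rw [h1, Finset.prod_update_of_mem (Finset.mem_univ i), Finset.erase_eq]

lemma isML_P (μ : Fin t → ℂ) (k : ℕ) (f : Raw L k) : IsML (P b wt μ k f) := by
  constructor
  · intro x i a a'
    show (∑ v : Fin k → Fin n, _) = (∑ v : Fin k → Fin n, _) + (∑ v : Fin k → Fin n, _)
    rw [← Finset.sum_add_distrib]
    refine Finset.sum_congr rfl fun v _ => ?_
    split_ifs with h
    · rw [prod_repr_update, prod_repr_update, prod_repr_update, map_add, Finsupp.add_apply]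
      ring
    · rw [add_zero]
  · intro x i c a
    show (∑ v : Fin k → Fin n, _) = c * (∑ v : Fin k → Fin n, _)
    rw [Finset.mul_sum]
    refine Finset.sum_congr rfl fun v _ => ?_
    split_ifs with h
    · rw [prod_repr_update, prod_repr_update, map_smul, Finsupp.smul_apply, smul_eq_mul]
      ring
    · rw [mul_zero]

lemma P_basis (μ : Fin t → ℂ) (k : ℕ) (f : Raw L k) (w : Fin k → Fin n) :
    P b wt μ k f (fun r => b (w r))
      = if (∑ r, wt (w r)) = μ then f (fun r => b (w r)) else 0 := by
  show (∑ v : Fin k → Fin n, _) = _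
  rw [Fintype.sum_eq_single w ?_]
  · split_ifs with h
    · rw [show (∏ r, b.repr (b (w r)) (w r)) = 1 from by simp, one_mul]
    · rfl
  · intro v hv
    obtain ⟨r0, hr0⟩ := Function.ne_iff.mp hv
    have hz : b.repr (b (w r0)) (v r0) = 0 := by
      rw [Module.Basis.repr_self]
      exact Finsupp.single_eq_of_ne hr0
    split_ifs
    · rw [Finset.prod_eq_zero (Finset.mem_univ r0) hz, zero_mul]
    · rfl

lemma P_zero_fun (μ : Fin t → ℂ) (k : ℕ) {f : Raw L k} (hf : ∀ x, f x = 0) (x : Fin k → L) :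
    P b wt μ k f x = 0 := by
  refine Finset.sum_eq_zero fun v _ => ?_
  split_ifs
  · rw [hf, mul_zero]
  · rfl

lemma P_mem_AltML (μ : Fin t → ℂ) (k : ℕ) {f : Raw L k} (hf : f ∈ AltML k) :
    P b wt μ k f ∈ AltML k := by
  refine ⟨(isML_P b wt μ k f).1, (isML_P b wt μ k f).2, ?_⟩
  intro x i j hij hx
  have hxswap : ∀ r, x (Equiv.swap i j r) = x r := by
    intro r
    rcases eq_or_ne r i with rfl | hri
    · rw [Equiv.swap_apply_left, hx]
    · rcases eq_or_ne r j with rfl | hrj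
      · rw [Equiv.swap_apply_right, hx]
      · rw [Equiv.swap_apply_of_ne_of_ne hri hrj]
  show (∑ v : Fin k → Fin n, _) = 0
  refine Finset.sum_involution (fun v _ => v ∘ Equiv.swap i j) ?_ ?_ (fun v _ => Finset.mem_univ _) ?_
  · intro v _
    beta_reduce
    have hW : (∑ r, wt ((v ∘ Equiv.swap i j) r)) = ∑ r, wt (v r) :=
      Equiv.sum_comp (Equiv.swap i j) (fun r => wt (v r))
    have hprod : (∏ r, b.repr (x r) ((v ∘ Equiv.swap i j) r)) = ∏ r, b.repr (x r) (v r) := by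
      calc (∏ r, b.repr (x r) (v (Equiv.swap i j r)))
          = ∏ r, b.repr (x (Equiv.swap i j r)) (v (Equiv.swap i j r)) := by
            refine Finset.prod_congr rfl fun r _ => ?_
            rw [hxswap]
        _ = ∏ r, b.repr (x r) (v r) :=
            Equiv.prod_comp (Equiv.swap i j) (fun r => b.repr (x r) (v r))
    by_cases hvij : v i = v j
    · have hfix : v ∘ Equiv.swap i j = v := by
        funext r
        rcases eq_or_ne r i with rfl | hri
        · simp [Equiv.swap_apply_left, hvij]
        · rcases eq_or_ne r j with rfl | hrj
          · simp [Equiv.swap_apply_right, hvij]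
          · simp [Equiv.swap_apply_of_ne_of_ne hri hrj]
      have hf0 : f (fun r => b (v r)) = 0 :=
        hf.2.2 (fun r => b (v r)) i j hij (congrArg b hvij)
      rw [hfix]
      split_ifs
      · rw [hf0, mul_zero, add_zero]
      · rw [add_zero]
    · have hswapval : f (fun r => b ((v ∘ Equiv.swap i j) r)) = - f (fun r => b (v r)) := by
        have h := (toAlt hf).map_swap (fun r => b (v r)) hij
        rw [toAlt_apply, toAlt_apply] at h
        exact h
      rw [hW, hprod]
      split_ifs
      · rw [hswapval]; ring
      · rw [add_zero]
  · intro v _ hv0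
    intro hfix
    apply hv0
    have hvij : v i = v j := by
      have := congrFun hfix i
      simpa [Equiv.swap_apply_left] using this.symm
    have hf0 : f (fun r => b (v r)) = 0 :=
      hf.2.2 (fun r => b (v r)) i j hij (congrArg b hvij)
    split_ifs
    · rw [hf0, mul_zero]
    · rfl
  · intro v _
    funext r
    simp [Function.comp, Equiv.swap_apply_self]


section EigenData

variable (g : Fin t → L) (hwt : ∀ v i, ⁅g i, b v⁆ = wt v i • b v)

include hwt in
lemma repr_lie (i : Fin t) (y : L) (w : Fin n) :
    b.repr ⁅g i, y⁆ w = wt w i * b.repr y w := by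
  have h1 : ⁅g i, y⁆ = ∑ u, b.repr y u • (wt u i • b u) := by
    conv_lhs => rw [← Module.Basis.sum_repr b y, ← LieAlgebra.ad_apply ℂ L]
    rw [map_sum]
    refine Finset.sum_congr rfl fun u _ => ?_
    rw [LinearMap.map_smul, LieAlgebra.ad_apply, hwt u i]
  rw [h1, map_sum, Finset.sum_apply']
  rw [Fintype.sum_eq_single w ?_]
  · rw [map_smul, map_smul, Module.Basis.repr_self, Finsupp.smul_apply, Finsupp.smul_apply,
      Finsupp.single_eq_same]
    simp [smul_eq_mul]
    ring
  · intro u hu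
    rw [map_smul, map_smul, Module.Basis.repr_self, Finsupp.smul_apply, Finsupp.smul_apply,
      Finsupp.single_eq_of_ne hu.symm]
    simp

include hwt in
lemma eigen_support {lam : Fin t → ℂ} {y : L} (hy : ∀ i, ⁅g i, y⁆ = lam i • y)
    {w : Fin n} (hw : b.repr y w ≠ 0) : wt w = lam := by
  funext i
  have h := repr_lie b wt g hwt i y w
  rw [hy i, map_smul, Finsupp.smul_apply, smul_eq_mul] at h
  exact (mul_right_cancel₀ hw h.symm)

include hwt in
lemma bracket_weight (a c e : Fin n) (hb : b.repr ⁅b a, b c⁆ e ≠ 0) :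
    wt e = wt a + wt c := by
  refine eigen_support b wt g hwt (lam := wt a + wt c) (y := ⁅b a, b c⁆) ?_ hb
  intro i
  rw [leibniz_lie, hwt a i, hwt c i, smul_lie, lie_smul, Pi.add_apply, add_smul]

include hwt in
lemma P_zero_weight (k : ℕ) (f : Raw L k) (lam : Fin k → Fin t → ℂ) (x : Fin k → L)
    (hx : ∀ r i, ⁅g i, x r⁆ = lam r i • x r) (hlam : (∑ r, lam r) ≠ 0) :
    P b wt 0 k f x = 0 := by
  refine Finset.sum_eq_zero fun v _ => ?_
  split_ifs with h
  · by_cases hall : ∀ r, b.repr (x r) (v r) ≠ 0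
    · exfalso
      apply hlam
      have : ∀ r, wt (v r) = lam r := fun r =>
        eigen_support b wt g hwt (fun i => hx r i) (hall r)
      rw [← h]
      exact Finset.sum_congr rfl fun r _ => (this r).symm
    · push_neg at hall
      obtain ⟨r0, hr0⟩ := hall
      rw [Finset.prod_eq_zero (Finset.mem_univ r0) hr0, zero_mul]
  · rfl

include hwt in
lemma P_eigen (μ : Fin t → ℂ) (k : ℕ) (f : Raw L k) (i : Fin t) (x : Fin k → L) :
    ∑ r, P b wt μ k f (update x r ⁅g i, x r⁆) = μ i * P b wt μ k f x := by
  show (∑ r, ∑ v : Fin k → Fin n, _) = μ i * ∑ v : Fin k → Fin n, _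
  rw [Finset.sum_comm, Finset.mul_sum]
  refine Finset.sum_congr rfl fun v _ => ?_
  split_ifs with h
  · have hr : ∀ r, (∏ s, b.repr (update x r ⁅g i, x r⁆ s) (v s))
        = wt (v r) i * ∏ s, b.repr (x s) (v s) := by
      intro r
      rw [prod_repr_update, repr_lie b wt g hwt, mul_assoc,
        Finset.mul_prod_erase Finset.univ (fun s => b.repr (x s) (v s)) (Finset.mem_univ r)]
    calc ∑ r, (∏ s, b.repr (update x r ⁅g i, x r⁆ s) (v s)) * f (fun s => b (v s))
        = ∑ r, wt (v r) i * ((∏ s, b.repr (x s) (v s)) * f (fun s => b (v s))) := by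
          refine Finset.sum_congr rfl fun r _ => ?_
          rw [hr r]; ring
      _ = (∑ r, wt (v r) i) * ((∏ s, b.repr (x s) (v s)) * f (fun s => b (v s))) := by
          rw [← Finset.sum_mul]
      _ = μ i * ((∏ s, b.repr (x s) (v s)) * f (fun s => b (v s))) := by
          congr 1
          rw [show (∑ r, wt (v r) i) = (∑ r, wt (v r)) i from (Finset.sum_apply i _ _).symm, h]
  · simp

end EigenData

lemma ml_cons_expand {k : ℕ} {h : Raw L (k+1)} (hh : IsML h) (z : L) (tail : Fin k → L) :
    h (Fin.cons z tail) = ∑ e : Fin n, b.repr z e * h (Fin.cons (b e) tail) := by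
  have hz : z = ∑ e, b.repr z e • b e := (Module.Basis.sum_repr b z).symm
  have h0 : update (Fin.cons z tail : Fin (k+1) → L) 0 (∑ e, b.repr z e • b e)
      = (Fin.cons z tail : Fin (k+1) → L) := by
    rw [Fin.update_cons_zero, ← hz]
  calc h (Fin.cons z tail)
      = hh.toML (update (Fin.cons z tail : Fin (k+1) → L) 0 (∑ e, b.repr z e • b e)) := by
        rw [h0]; rfl
    _ = ∑ e, hh.toML (update (Fin.cons z tail : Fin (k+1) → L) 0 (b.repr z e • b e)) :=
        hh.toML.map_update_sum Finset.univ 0 (fun e => b.repr z e • b e)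
          (Fin.cons z tail : Fin (k+1) → L)
    _ = ∑ e : Fin n, b.repr z e * h (Fin.cons (b e) tail) := by
        refine Finset.sum_congr rfl fun e _ => ?_
        rw [MultilinearMap.map_update_smul, smul_eq_mul, Fin.update_cons_zero]
        rfl

section EigenData2

variable (g : Fin t → L) (hwt : ∀ v i, ⁅g i, b v⁆ = wt v i • b v)

include hwt in
lemma d_P_comm (μ : Fin t → ℂ) (k : ℕ) {f : Raw L k} (hf : IsML f) :
    d k (P b wt μ k f) = P b wt μ (k+1) (d k f) := by
  cases k with
  | zero =>
    funext x
    rw [d_zero_apply]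
    exact (P_zero_fun b wt μ 1 (fun y => d_zero_apply f y) x).symm
  | succ m =>
    refine eq_of_isML b (isML_d (isML_P b wt μ (m+1) f)) (isML_P b wt μ (m+2) (d (m+1) f)) ?_
    intro w
    rw [P_basis, d_apply', d_apply']
    have hterm : ∀ (i : Fin (m+2)) (j : Fin (m+1)), (i:ℕ) ≤ (j:ℕ) →
        ∀ h' : Raw L (m+1), IsML h' →
        h' (tup i j (fun r => b (w r)))
          = ∑ e : Fin n, b.repr ⁅b (w i), b (w j.succ)⁆ e *
              h' (fun r => b ((Fin.cons e (w ∘ i.succAbove ∘ j.succAbove) : Fin (m+1) → Fin n) r)) := by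
      intro i j hij h' hh'
      have h1 : tup i j (fun r => b (w r))
          = Fin.cons ⁅b (w i), b (w j.succ)⁆ (fun s => b (w (i.succAbove (j.succAbove s)))) := rfl
      rw [h1, ml_cons_expand b hh']
      refine Finset.sum_congr rfl fun e _ => ?_
      refine congrArg _ (congrArg h' (funext fun r => ?_))
      refine Fin.cases ?_ (fun s => ?_) r
      · rw [Fin.cons_zero, Fin.cons_zero]
      · rw [Fin.cons_succ, Fin.cons_succ]
        rfl
    have hWsum : ∀ (i : Fin (m+2)) (j : Fin (m+1)), (i:ℕ) ≤ (j:ℕ) → ∀ e : Fin n,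
        b.repr ⁅b (w i), b (w j.succ)⁆ e ≠ 0 →
        ((∑ r, wt ((Fin.cons e (w ∘ i.succAbove ∘ j.succAbove) : Fin (m+1) → Fin n) r)) = μ
          ↔ (∑ r, wt (w r)) = μ) := by
      intro i j hij e he
      have hbw := bracket_weight b wt g hwt _ _ _ he
      have hsum : (∑ r, wt ((Fin.cons e (w ∘ i.succAbove ∘ j.succAbove) : Fin (m+1) → Fin n) r))
          = ∑ r, wt (w r) := by
        rw [Fin.sum_univ_succ]
        rw [Fin.sum_univ_succAbove (fun r => wt (w r)) i,
          Fin.sum_univ_succAbove (fun u => wt (w (i.succAbove u))) j,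
          succAbove_succ_eq hij]
        simp only [Fin.cons_succ, Fin.cons_zero, Function.comp_apply]
        rw [hbw]
        abel
      rw [hsum]
    by_cases hW : (∑ r, wt (w r)) = μ
    · rw [if_pos hW]
      refine Finset.sum_congr rfl fun i _ => Finset.sum_congr rfl fun j _ => ?_
      by_cases hij : (i:ℕ) ≤ (j:ℕ)
      · rw [if_pos hij, if_pos hij]
        congr 1
        rw [hterm i j hij _ (isML_P b wt μ (m+1) f), hterm i j hij f hf]
        refine Finset.sum_congr rfl fun e _ => ?_
        by_cases he : b.repr ⁅b (w i), b (w j.succ)⁆ e = 0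
        · rw [he, zero_mul, zero_mul]
        · rw [P_basis, if_pos ((hWsum i j hij e he).mpr hW)]
      · rw [if_neg hij, if_neg hij]
    · rw [if_neg hW]
      refine Finset.sum_eq_zero fun i _ => Finset.sum_eq_zero fun j _ => ?_
      by_cases hij : (i:ℕ) ≤ (j:ℕ)
      · rw [if_pos hij, hterm i j hij _ (isML_P b wt μ (m+1) f)]
        rw [Finset.sum_eq_zero, mul_zero]
        intro e _
        by_cases he : b.repr ⁅b (w i), b (w j.succ)⁆ e = 0
        · rw [he, zero_mul]
        · rw [P_basis, if_neg (fun hc => hW ((hWsum i j hij e he).mp hc)), mul_zero]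
      · rw [if_neg hij]

end EigenData2

/-- A nonzero-weight cocycle is a coboundary (via the Cartan homotopy). -/
lemma exact_of_ne_zero {g0 : L} {c : ℂ} (hc : c ≠ 0) {k : ℕ} {F : Raw L (k+1)}
    (hFa : F ∈ AltML (k+1)) (hFd : d (k+1) F = 0)
    (heig : ∀ x, ∑ r, F (update x r ⁅g0, x r⁆) = c * F x) :
    ∃ u ∈ AltML k, d k u = F := by
  have hdio : ∀ x, d k (iota g0 F) x = - c * F x := by
    intro x
    have hcar := cartan hFa g0 x
    have h2 : d (k+1) F (Fin.cons g0 x) = 0 := by rw [hFd]; rfl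
    rw [h2, add_zero, heig x] at hcar
    rw [hcar]; ring
  refine ⟨(-c)⁻¹ • iota g0 F, Submodule.smul_mem _ _ (iota_mem hFa), ?_⟩
  rw [map_smul]
  funext x
  have hcne : (-c) ≠ 0 := neg_ne_zero.mpr hc
  show (-c)⁻¹ * (d k (iota g0 F) x) = F x
  rw [hdio x, ← mul_assoc, inv_mul_cancel₀ hcne, one_mul]

section Weight2

variable {n t : ℕ} (b : Module.Basis (Fin n) ℂ L) (wt : Fin n → Fin t → ℂ)

open scoped Classical in
lemma P_decomp (k : ℕ) {f : Raw L k} (hf : IsML f) :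
    f = ∑ μ ∈ Finset.univ.image (fun v : Fin k → Fin n => ∑ r, wt (v r)),
          P b wt μ k f := by
  symm
  refine eq_of_isML b ?_ hf ?_
  · exact IsML.sum _ _ (fun μ _ => isML_P b wt μ k f)
  · intro w
    rw [Finset.sum_apply]
    have hterm : ∀ μ, P b wt μ k f (fun r => b (w r))
        = if (∑ r, wt (w r)) = μ then f (fun r => b (w r)) else 0 :=
      fun μ => P_basis b wt μ k f w
    rw [Finset.sum_congr rfl (fun μ _ => hterm μ)]
    rw [Finset.sum_eq_single_of_mem (∑ r, wt (w r))
      (Finset.mem_image_of_mem (fun v : Fin k → Fin n => ∑ r, wt (v r))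
        (Finset.mem_univ w)) ?_]
    · rw [if_pos rfl]
    · intro μ _ hμ
      rw [if_neg (fun hc => hμ hc.symm)]

lemma P_eq_zero_of_not_mem (k : ℕ) (f : Raw L k) {μ : Fin t → ℂ}
    (hμ : ∀ v : Fin k → Fin n, (∑ r, wt (v r)) ≠ μ) : P b wt μ k f = 0 := by
  funext x
  refine Finset.sum_eq_zero fun v _ => ?_
  rw [if_neg (hμ v)]

lemma P_eq_self (k : ℕ) {f : Raw L k} (hf : IsML f)
    (h0 : ∀ w : Fin k → Fin n, (∑ r, wt (w r)) ≠ 0 → f (fun r => b (w r)) = 0) :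
    P b wt 0 k f = f := by
  refine eq_of_isML b (isML_P b wt 0 k f) hf ?_
  intro w
  rw [P_basis]
  split_ifs with h
  · rfl
  · rw [h0 w h]

end Weight2

end Weight


variable (L)

end CE


noncomputable section

namespace CE

variable {L : Type*} [LieRing L] [LieAlgebra ℂ L]

/-- The weight-zero subcomplex determined by commuting elements `g₁, …, g_t`: a cochain
has weight zero when it vanishes on every tuple of simultaneous eigenvectors of the
`ad gᵢ` whose weights do not sum to zero. -/
def weightZero {t : ℕ} (g : Fin t → L) (k : ℕ) : Submodule ℂ (Raw L k) where
  carrier := {f | ∀ (lam : Fin k → Fin t → ℂ) (x : Fin k → L),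
    (∀ r i, ⁅g i, x r⁆ = lam r i • x r) → (∑ r, lam r) ≠ 0 → f x = 0}
  add_mem' := by
    intro f f' hf hf' lam x hx hlam
    simp only [Pi.add_apply, hf lam x hx hlam, hf' lam x hx hlam, add_zero]
  zero_mem' := by intro lam x hx hlam; rfl
  smul_mem' := by
    intro c f hf lam x hx hlam
    simp only [Pi.smul_apply, smul_eq_mul, hf lam x hx hlam, mul_zero]

end CE

open CE in
/-- Fuchs' lemma: if `g₁, …, g_t` are pairwise commuting elements of a finite-dimensional
complex Lie algebra `𝔤` admitting a basis of simultaneous eigenvectors of all `ad gᵢ`,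
then the inclusion of the weight-zero subcomplex into the full Chevalley–Eilenberg
complex induces an isomorphism on cohomology with trivial coefficients:
every cocycle is cohomologous to a weight-zero cocycle, and a weight-zero cocycle that
is a coboundary is the coboundary of a weight-zero cochain. -/
theorem weight_zero_subcomplex_quasi_iso (L : Type*) [LieRing L] [LieAlgebra ℂ L]
    [FiniteDimensional ℂ L] (t : ℕ) (g : Fin t → L)
    (hcomm : ∀ i j, ⁅g i, g j⁆ = 0)
    (hbasis : ∃ b : Module.Basis (Fin (Module.finrank ℂ L)) ℂ L,
      ∀ v i, ∃ c : ℂ, ⁅g i, b v⁆ = c • b v) :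
    (∀ f ∈ cocycles L 0, f ∈ weightZero g 0) ∧
      (∀ k, ∀ f ∈ cocycles L (k+1), ∃ h ∈ cocycles L (k+1) ⊓ weightZero g (k+1),
        f - h ∈ coboundaries L k) ∧
      (∀ k, ∀ h ∈ cocycles L (k+1) ⊓ weightZero g (k+1), h ∈ coboundaries L k →
        h ∈ (AltML k ⊓ weightZero g k).map (d k)) := by
  classical
  obtain ⟨b, hb⟩ := hbasis
  choose wt hwt using hb
  have part2aux : ∀ k : ℕ, ∀ f : Raw L (k+1), f ∈ AltML (k+1) → d (k+1) f = 0 →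
      ∀ μ : Fin t → ℂ, μ ≠ 0 → P b wt μ (k+1) f ∈ coboundaries L k := by
    intro k f hfa hfk μ hμ
    obtain ⟨i0, hi0⟩ : ∃ i0, μ i0 ≠ 0 := by
      simpa using Function.ne_iff.mp hμ
    have halt := P_mem_AltML b wt μ (k+1) hfa
    have hd0 : d (k+1) (P b wt μ (k+1) f) = 0 := by
      rw [d_P_comm b wt g hwt μ (k+1) (isML_of_mem_AltML hfa), hfk]
      funext x
      exact P_zero_fun b wt μ (k+2) (fun y => rfl) x
    obtain ⟨u, hu, hdu⟩ := exact_of_ne_zero (g0 := g i0) hi0 halt hd0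
      (fun x => P_eigen b wt g hwt μ (k+1) f i0 x)
    exact Submodule.mem_map.mpr ⟨u, hu, hdu⟩
  refine ⟨?_, ?_, ?_⟩
  · intro f _ lam x _ hlam
    exact absurd (by simp : (∑ r : Fin 0, lam r) = 0) hlam
  · intro k f hf
    have hf' : f ∈ AltML (k+1) ⊓ LinearMap.ker (d (k+1)) := hf
    have hfa : f ∈ AltML (k+1) := hf'.1
    have hfk : d (k+1) f = 0 := LinearMap.mem_ker.mp hf'.2
    have halt := P_mem_AltML b wt 0 (k+1) hfa
    have hd0 : d (k+1) (P b wt 0 (k+1) f) = 0 := by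
      rw [d_P_comm b wt g hwt 0 (k+1) (isML_of_mem_AltML hfa), hfk]
      funext x
      exact P_zero_fun b wt 0 (k+2) (fun y => rfl) x
    refine ⟨P b wt 0 (k+1) f, ?_, ?_⟩
    · refine Submodule.mem_inf.mpr ⟨?_, ?_⟩
      · show P b wt 0 (k+1) f ∈ AltML (k+1) ⊓ LinearMap.ker (d (k+1))
        exact Submodule.mem_inf.mpr ⟨halt, LinearMap.mem_ker.mpr hd0⟩
      · show ∀ (lam : Fin (k+1) → Fin t → ℂ) (x : Fin (k+1) → L),
          (∀ r i, ⁅g i, x r⁆ = lam r i • x r) → (∑ r, lam r) ≠ 0 →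
            P b wt 0 (k+1) f x = 0
        exact fun lam x hx hlam => P_zero_weight b wt g hwt (k+1) f lam x hx hlam
    · obtain ⟨T, hdec, hTmem⟩ :
          ∃ T : Finset (Fin t → ℂ), f = (∑ μ ∈ T, P b wt μ (k+1) f) ∧
            ∀ v : Fin (k+1) → Fin (Module.finrank ℂ L), (∑ r, wt (v r)) ∈ T :=
        ⟨_, P_decomp b wt (k+1) (isML_of_mem_AltML hfa),
          fun v => Finset.mem_image_of_mem _ (Finset.mem_univ v)⟩
      by_cases h0T : (0 : Fin t → ℂ) ∈ T
      · have hsplit : f - P b wt 0 (k+1) f = ∑ μ ∈ T.erase 0, P b wt μ (k+1) f := by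
          rw [sub_eq_iff_eq_add, Finset.sum_erase_add T (fun μ => P b wt μ (k+1) f) h0T]
          exact hdec
        rw [hsplit]
        exact Submodule.sum_mem _ fun μ hμ =>
          part2aux k f hfa hfk μ (Finset.mem_erase.mp hμ).1
      · have hz : P b wt 0 (k+1) f = 0 := by
          refine P_eq_zero_of_not_mem b wt (k+1) f fun v hv => ?_
          exact h0T (hv ▸ hTmem v)
        rw [hz, sub_zero, hdec]
        refine Submodule.sum_mem _ fun μ hμ => ?_
        refine part2aux k f hfa hfk μ fun h0 => h0T ?_
        rw [← h0]; exact hμ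
  · intro k h hh hcb
    have hh' := Submodule.mem_inf.mp hh
    have hha : h ∈ AltML (k+1) :=
      (Submodule.mem_inf.mp hh'.1).1
    have hwz : ∀ (lam : Fin (k+1) → Fin t → ℂ) (x : Fin (k+1) → L),
        (∀ r i, ⁅g i, x r⁆ = lam r i • x r) → (∑ r, lam r) ≠ 0 → h x = 0 := hh'.2
    obtain ⟨u, huA, hdu⟩ := Submodule.mem_map.mp hcb
    refine Submodule.mem_map.mpr ⟨P b wt 0 k u, Submodule.mem_inf.mpr ⟨?_, ?_⟩, ?_⟩
    · exact P_mem_AltML b wt 0 k huA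
    · show ∀ (lam : Fin k → Fin t → ℂ) (x : Fin k → L),
        (∀ r i, ⁅g i, x r⁆ = lam r i • x r) → (∑ r, lam r) ≠ 0 →
          P b wt 0 k u x = 0
      exact fun lam x hx hlam => P_zero_weight b wt g hwt k u lam x hx hlam
    · rw [d_P_comm b wt g hwt 0 k (isML_of_mem_AltML huA), hdu]
      refine P_eq_self b wt (k+1) (isML_of_mem_AltML hha) ?_
      intro w hW
      exact hwz (fun r => wt (w r)) (fun r => b (w r)) (fun r i => hwt (w r) i) hW
end
end
end
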